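/- Let ABC be a nondegenerate triangle in ℝ² with angles α = ∠BAC, β = ∠ABC, side length c = |AB|, and semiperimeter p = (|BC|+|CA|+|AB|)/2 ≤ 1. Let A₁ be the point at distance 1 from A along the interior angle bisector from A, and B₁ the point at distance 1 from B along the interior angle bisector from B. Then |A₁B₁|² ≥ 1 + (1−c)² + 2c(1 − cos(α/2))(1 − cos(β/2)) > 1. -/

import Mathlib

open scoped RealInnerProductSpace Pointwise
open MeasureTheory

/-- A convex body: compact, convex, with nonempty interior. -/
def IsConvexBody {n : ℕ} (K : Set (EuclideanSpace ℝ (Fin n))) : Prop :=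
  IsCompact K ∧ Convex ℝ K ∧ (interior K).Nonempty

/-- The (possibly non-symmetric) norm with unit ball `T°`: `‖v‖_T = max_{p ∈ T} ⟨p, v⟩`. -/
noncomputable def suppNorm {n : ℕ} (T : Set (EuclideanSpace ℝ (Fin n)))
    (v : EuclideanSpace ℝ (Fin n)) : ℝ :=
  sSup ((fun p => ⟪p, v⟫) '' T)

/-- The vertex set `q 0, …, q (m-1)` cannot be translated into the interior of `K`. -/
def NotTranslatableInto {n : ℕ} (m : ℕ) (q : ℕ → EuclideanSpace ℝ (Fin n))
    (K : Set (EuclideanSpace ℝ (Fin n))) : Prop :=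
  ∀ t : EuclideanSpace ℝ (Fin n), ∃ i < m, q i + t ∉ interior K

/-- `ξ_T(K)`: the length of the shortest closed billiard trajectory in `K` with geometry
given by `T`, characterized à la Bezdek–Bezdek as the infimum of `ℓ_T`-lengths of closed
polygonal lines whose vertex set cannot be translated into the interior of `K`. -/
noncomputable def xi {n : ℕ} (T K : Set (EuclideanSpace ℝ (Fin n))) : ℝ :=
  sInf {ℓ : ℝ | ∃ m : ℕ, 2 ≤ m ∧ ∃ q : ℕ → EuclideanSpace ℝ (Fin n),
    NotTranslatableInto m q K ∧
    ℓ = ∑ i ∈ Finset.range m, suppNorm T (q ((i + 1) % m) - q i)}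

/-- `ξ_B(K)`: the Euclidean version of `xi`. -/
noncomputable def xiB {n : ℕ} (K : Set (EuclideanSpace ℝ (Fin n))) : ℝ :=
  sInf {ℓ : ℝ | ∃ m : ℕ, 2 ≤ m ∧ ∃ q : ℕ → EuclideanSpace ℝ (Fin n),
    NotTranslatableInto m q K ∧
    ℓ = ∑ i ∈ Finset.range m, ‖q ((i + 1) % m) - q i‖}

/-- The Euclidean width of `K`: the minimum over unit directions of the breadth. -/
noncomputable def widthB {n : ℕ} (K : Set (EuclideanSpace ℝ (Fin n))) : ℝ :=
  sInf {w : ℝ | ∃ p : EuclideanSpace ℝ (Fin n), ‖p‖ = 1 ∧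
    w = sSup ((fun q => ⟪p, q⟫) '' K) - sInf ((fun q => ⟪p, q⟫) '' K)}

/-- The polar body `K° = {p : ⟨p, q⟩ ≤ 1 ∀ q ∈ K}`. -/
def polarBody {n : ℕ} (K : Set (EuclideanSpace ℝ (Fin n))) :
    Set (EuclideanSpace ℝ (Fin n)) :=
  {p | ∀ q ∈ K, ⟪p, q⟫ ≤ 1}

set_option maxHeartbeats 1000000

open EuclideanGeometry in
/-- For a triangle with semiperimeter `p ≤ 1`, the points `A₁, B₁` at distance 1 along
the interior bisectors from `A` and `B` satisfy
`|A₁B₁|² ≥ 1 + (1−c)² + 2c(1 − cos(α/2))(1 − cos(β/2)) > 1`. -/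
theorem bisector_points_far (A B C A₁ B₁ : EuclideanSpace ℝ (Fin 2))
    (hnd : AffineIndependent ℝ ![A, B, C])
    (α β c p : ℝ)
    (hα : α = ∠ B A C) (hβ : β = ∠ A B C) (hc : c = dist A B)
    (hp : p = (dist B C + dist C A + dist A B) / 2) (hp1 : p ≤ 1)
    (hA₁ : A₁ = A + ‖(dist A B)⁻¹ • (B - A) + (dist A C)⁻¹ • (C - A)‖⁻¹ •
      ((dist A B)⁻¹ • (B - A) + (dist A C)⁻¹ • (C - A)))
    (hB₁ : B₁ = B + ‖(dist B A)⁻¹ • (A - B) + (dist B C)⁻¹ • (C - B)‖⁻¹ •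
      ((dist B A)⁻¹ • (A - B) + (dist B C)⁻¹ • (C - B))) :
    1 + (1 - c) ^ 2 + 2 * c * (1 - Real.cos (α / 2)) * (1 - Real.cos (β / 2)) ≤
      dist A₁ B₁ ^ 2 ∧
    1 < dist A₁ B₁ ^ 2 := by
  have hcol : ¬Collinear ℝ ({A, B, C} : Set (EuclideanSpace ℝ (Fin 2))) :=
    affineIndependent_iff_not_collinear_set.mp hnd
  have hsetBAC : ({B, A, C} : Set (EuclideanSpace ℝ (Fin 2))) = {A, B, C} := by
    ext z; simp; tauto
  have hsetBCA : ({B, C, A} : Set (EuclideanSpace ℝ (Fin 2))) = {A, B, C} := by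
    ext z; simp; tauto
  have hAB : A ≠ B := ne₁₂_of_not_collinear hcol
  have hAC : A ≠ C := ne₁₃_of_not_collinear hcol
  have hBC : B ≠ C := ne₂₃_of_not_collinear hcol
  set γ : ℝ := ∠ B C A with hγ
  have hα0 : 0 < α := hα ▸ angle_pos_of_not_collinear (hsetBAC ▸ hcol)
  have hαπ : α < Real.pi := hα ▸ angle_lt_pi_of_not_collinear (hsetBAC ▸ hcol)
  have hβ0 : 0 < β := hβ ▸ angle_pos_of_not_collinear hcol
  have hβπ : β < Real.pi := hβ ▸ angle_lt_pi_of_not_collinear hcol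
  have hγ0 : 0 < γ := hγ ▸ angle_pos_of_not_collinear (hsetBCA ▸ hcol)
  have hsum : β + γ + α = Real.pi := by
    rw [hβ, hγ, hα, ← angle_comm C A B]
    exact angle_add_angle_add_angle_eq_pi C hAB.symm
  -- vectors
  set x := B - A with hxdef
  set y := C - A with hydef
  have hyx : C - B = y - x := by rw [hxdef, hydef]; abel
  have hnegx : A - B = -x := by rw [hxdef]; abel
  have hxmy : B - C = x - y := by rw [hxdef, hydef]; abel
  -- side lengths
  have hcn : dist A B = ‖x‖ := by rw [dist_eq_norm' A B]
  have hbn : dist A C = ‖y‖ := by rw [dist_eq_norm' A C]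
  have hba : dist B A = ‖x‖ := by rw [dist_comm, hcn]
  have han : dist B C = ‖y - x‖ := by rw [dist_eq_norm' B C, hyx]
  have hca : dist C A = ‖y‖ := by rw [dist_comm, hbn]
  set a := ‖y - x‖ with hadef
  set b := ‖y‖ with hbdef
  set cc := ‖x‖ with hccdef
  have hx0 : x ≠ 0 := sub_ne_zero.mpr hAB.symm
  have hy0 : y ≠ 0 := sub_ne_zero.mpr hAC.symm
  have hyx0 : y - x ≠ 0 := by
    rw [← hyx]; exact sub_ne_zero.mpr hBC.symm
  have hc0 : (0:ℝ) < cc := norm_pos_iff.mpr hx0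
  have hb0 : (0:ℝ) < b := norm_pos_iff.mpr hy0
  have ha0 : (0:ℝ) < a := norm_pos_iff.mpr hyx0
  -- unit vectors
  set u1 : EuclideanSpace ℝ (Fin 2) := cc⁻¹ • x with hu1
  set u2 : EuclideanSpace ℝ (Fin 2) := b⁻¹ • y with hu2
  set u3 : EuclideanSpace ℝ (Fin 2) := a⁻¹ • (y - x) with hu3
  have n11 : ⟪u1, u1⟫ = 1 := by
    rw [hu1, real_inner_smul_left, real_inner_smul_right, real_inner_self_eq_norm_sq, ← hccdef]
    field_simp
  have n22 : ⟪u2, u2⟫ = 1 := by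
    rw [hu2, real_inner_smul_left, real_inner_smul_right, real_inner_self_eq_norm_sq, ← hbdef]
    field_simp
  have n33 : ⟪u3, u3⟫ = 1 := by
    rw [hu3, real_inner_smul_left, real_inner_smul_right, real_inner_self_eq_norm_sq, ← hadef]
    field_simp
  -- angles as vector angles
  have hαv : α = InnerProductGeometry.angle x y := by
    rw [hα]; simp [EuclideanGeometry.angle, vsub_eq_sub]; rfl
  have hβv : β = InnerProductGeometry.angle (-x) (y - x) := by
    rw [hβ]; simp only [EuclideanGeometry.angle, vsub_eq_sub, hnegx, hyx]
  have hγv : γ = InnerProductGeometry.angle (x - y) (-y) := by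
    rw [hγ]; simp only [EuclideanGeometry.angle, vsub_eq_sub, hxmy]
    congr 1
    rw [hydef]; abel
  -- inner products of unit vectors
  have i12 : ⟪u1, u2⟫ = Real.cos α := by
    rw [hu1, hu2, real_inner_smul_left, real_inner_smul_right, hαv,
      InnerProductGeometry.cos_angle, ← hccdef, ← hbdef]
    field_simp
  have i13 : ⟪u1, u3⟫ = -Real.cos β := by
    have h : ⟪-x, y - x⟫ = Real.cos β * (‖-x‖ * ‖y - x‖) := by
      rw [hβv]; exact (InnerProductGeometry.cos_angle_mul_norm_mul_norm _ _).symm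
    rw [inner_neg_left, norm_neg, ← hccdef, ← hadef] at h
    rw [hu1, hu3, real_inner_smul_left, real_inner_smul_right]
    have h2 : ⟪x, y - x⟫ = -(Real.cos β * (cc * a)) := by linarith
    rw [h2]
    field_simp
  have i23 : ⟪u2, u3⟫ = Real.cos γ := by
    have h : ⟪x - y, -y⟫ = Real.cos γ * (‖x - y‖ * ‖-y‖) := by
      rw [hγv]; exact (InnerProductGeometry.cos_angle_mul_norm_mul_norm _ _).symm
    have hn : ‖x - y‖ = a := by rw [← norm_neg]; congr 1; abel
    rw [hn] at h
    rw [← neg_sub y x, inner_neg_left, inner_neg_right, neg_neg, norm_neg, ← hbdef] at h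
    rw [hu2, hu3, real_inner_smul_left, real_inner_smul_right, real_inner_comm (y - x) y, h]
    rw [show Real.cos γ * (a * b) = a * (b * Real.cos γ) from by ring,
      inv_mul_cancel_left₀ ha0.ne', inv_mul_cancel_left₀ hb0.ne']
  have i21 : ⟪u2, u1⟫ = Real.cos α := (real_inner_comm u1 u2).trans i12
  have i31 : ⟪u3, u1⟫ = -Real.cos β := (real_inner_comm u1 u3).trans i13
  have i32 : ⟪u3, u2⟫ = Real.cos γ := (real_inner_comm u2 u3).trans i23
  -- the side relation
  have hside : cc • u1 + a • u3 = b • u2 := by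
    rw [hu1, hu2, hu3, smul_smul, smul_smul, smul_smul,
      mul_inv_cancel₀ hc0.ne', mul_inv_cancel₀ ha0.ne', mul_inv_cancel₀ hb0.ne',
      one_smul, one_smul, one_smul]
    abel
  -- projection identities
  have P1 : cc - Real.cos β * a = Real.cos α * b := by
    have h := congrArg (fun v => ⟪v, u1⟫) hside
    simp only [inner_add_left, real_inner_smul_left] at h
    rw [n11, i31, i21] at h
    linarith
  have P2 : Real.cos α * cc + Real.cos γ * a = b := by
    have h := congrArg (fun v => ⟪v, u2⟫) hside
    simp only [inner_add_left, real_inner_smul_left] at h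
    rw [i12, i32, n22] at h
    linarith
  -- half angles
  set s := α / 2 with hsdef
  set t := β / 2 with htdef
  have hs2 : α = 2 * s := by rw [hsdef]; ring
  have ht2 : β = 2 * t := by rw [htdef]; ring
  have pi_pos := Real.pi_pos
  have hcs_pos : 0 < Real.cos s := by
    apply Real.cos_pos_of_mem_Ioo
    constructor <;> [skip; skip] <;> rw [hsdef] <;> linarith
  have hct_pos : 0 < Real.cos t := by
    apply Real.cos_pos_of_mem_Ioo
    constructor <;> rw [htdef] <;> linarith
  have hcst_pos : 0 < Real.cos (s + t) := by
    apply Real.cos_pos_of_mem_Ioo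
    constructor <;> rw [hsdef, htdef] <;> linarith
  have hcosα : Real.cos α = 2 * Real.cos s ^ 2 - 1 := by
    rw [hs2, Real.cos_two_mul]
  have hcosβ : Real.cos β = 2 * Real.cos t ^ 2 - 1 := by
    rw [ht2, Real.cos_two_mul]
  have hγval : γ = Real.pi - (α + β) := by linarith
  have hst2 : α + β = 2 * (s + t) := by rw [hs2, ht2]; ring
  have hcosγ : Real.cos γ = -(2 * Real.cos (s + t) ^ 2 - 1) := by
    rw [hγval, Real.cos_pi_sub, hst2, Real.cos_two_mul]
  have hsinγ : Real.sin γ = Real.sin (α + β) := by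
    rw [hγval, Real.sin_pi_sub]
  have hcst : Real.cos (s + t) = Real.cos s * Real.cos t - Real.sin s * Real.sin t :=
    Real.cos_add s t
  have Ps := Real.sin_sq_add_cos_sq s
  have Pt := Real.sin_sq_add_cos_sq t
  -- the bisector direction vectors
  have hwA : (dist A B)⁻¹ • (B - A) + (dist A C)⁻¹ • (C - A) = u1 + u2 := by
    rw [hcn, hbn, hu1, hu2]
  have hwB : (dist B A)⁻¹ • (A - B) + (dist B C)⁻¹ • (C - B) = -u1 + u3 := by
    rw [hba, han, hnegx, hyx, hu1, hu3, smul_neg]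
  rw [hwA] at hA₁
  rw [hwB] at hB₁
  -- norms of bisector vectors
  have iAA : ⟪u1 + u2, u1 + u2⟫ = (2 * Real.cos s) ^ 2 := by
    simp only [inner_add_left, inner_add_right]
    rw [n11, n22, i12, i21, hcosα]
    ring
  have iBB : ⟪-u1 + u3, -u1 + u3⟫ = (2 * Real.cos t) ^ 2 := by
    simp only [inner_add_left, inner_add_right, inner_neg_left, inner_neg_right]
    rw [n11, n33, i13, i31, hcosβ]
    ring
  have nA : ‖u1 + u2‖ = 2 * Real.cos s := by
    have h1 : ‖u1 + u2‖ ^ 2 = (2 * Real.cos s) ^ 2 := by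
      rw [← real_inner_self_eq_norm_sq, iAA]
    have h2 : (‖u1 + u2‖ - 2 * Real.cos s) * (‖u1 + u2‖ + 2 * Real.cos s) = 0 := by
      linear_combination h1
    rcases mul_eq_zero.mp h2 with h | h
    · linarith
    · linarith [norm_nonneg (u1 + u2)]
  have nB : ‖-u1 + u3‖ = 2 * Real.cos t := by
    have h1 : ‖-u1 + u3‖ ^ 2 = (2 * Real.cos t) ^ 2 := by
      rw [← real_inner_self_eq_norm_sq, iBB]
    have h2 : (‖-u1 + u3‖ - 2 * Real.cos t) * (‖-u1 + u3‖ + 2 * Real.cos t) = 0 := by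
      linear_combination h1
    rcases mul_eq_zero.mp h2 with h | h
    · linarith
    · linarith [norm_nonneg (-u1 + u3)]
  -- the normalized bisector vectors
  set u : EuclideanSpace ℝ (Fin 2) := (2 * Real.cos s)⁻¹ • (u1 + u2) with hu
  set v : EuclideanSpace ℝ (Fin 2) := (2 * Real.cos t)⁻¹ • (-u1 + u3) with hv'
  have hv : A₁ - B₁ = -x + (u - v) := by
    rw [hA₁, hB₁, nA, nB, hxdef, hu, hv']
    abel
  have hxu1 : x = cc • u1 := by
    rw [hu1, smul_smul, mul_inv_cancel₀ hc0.ne', one_smul]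
  have huu : ⟪u, u⟫ = 1 := by
    rw [hu, real_inner_smul_left, real_inner_smul_right, iAA]
    field_simp
  have hvv : ⟪v, v⟫ = 1 := by
    rw [hv', real_inner_smul_left, real_inner_smul_right, iBB]
    field_simp
  have ixA : ⟪x, u1 + u2⟫ = cc * (1 + Real.cos α) := by
    rw [hxu1]
    simp only [inner_add_right, real_inner_smul_left]
    rw [n11, i12]
    ring
  have ixB : ⟪x, -u1 + u3⟫ = -(cc * (1 + Real.cos β)) := by
    rw [hxu1]
    simp only [inner_add_right, inner_neg_right, real_inner_smul_left]
    rw [n11, i13]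
    ring
  have hxu : ⟪x, u⟫ = cc * Real.cos s := by
    rw [hu, real_inner_smul_right, ixA, hcosα]
    field_simp
    ring
  have hxv : ⟪x, v⟫ = -(cc * Real.cos t) := by
    rw [hv', real_inner_smul_right, ixB, hcosβ]
    field_simp
    ring
  have iAB : ⟪u1 + u2, -u1 + u3⟫ = -1 - Real.cos α - Real.cos β + Real.cos γ := by
    simp only [inner_add_left, inner_add_right, inner_neg_right]
    rw [n11, i13, i21, i23]
    ring
  have huv : ⟪u, v⟫ = -Real.cos (s + t) := by
    rw [hu, hv', real_inner_smul_left, real_inner_smul_right, iAB]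
    have aux : -1 - Real.cos α - Real.cos β + Real.cos γ =
        2 * Real.cos s * (2 * Real.cos t * (-Real.cos (s + t))) := by
      rw [hcosα, hcosβ, hcosγ, hcst]
      linear_combination (-2 * Real.sin t ^ 2) * Ps + (2 * Real.cos s ^ 2 - 2) * Pt
    rw [aux]
    have h2s : (2 * Real.cos s) ≠ 0 := by linarith
    have h2t : (2 * Real.cos t) ≠ 0 := by linarith
    field_simp
  have hux : ⟪u, x⟫ = cc * Real.cos s := (real_inner_comm x u).trans hxu
  have hvx : ⟪v, x⟫ = -(cc * Real.cos t) := (real_inner_comm x v).trans hxv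
  have hvu : ⟪v, u⟫ = -Real.cos (s + t) := (real_inner_comm u v).trans huv
  -- the squared distance
  have hxx : ⟪x, x⟫ = cc ^ 2 := real_inner_self_eq_norm_sq x
  have hdistsq : dist A₁ B₁ ^ 2 =
      cc ^ 2 + 2 - 2 * cc * Real.cos s - 2 * cc * Real.cos t + 2 * Real.cos (s + t) := by
    rw [dist_eq_norm, ← real_inner_self_eq_norm_sq, hv]
    simp only [inner_add_left, inner_add_right, inner_sub_left, inner_sub_right,
      inner_neg_left, inner_neg_right]
    rw [hxx, huu, hvv, huv, hvu, hxu, hxv, hux, hvx]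
    ring
  -- law of sines consequences
  have hsinα_pos : 0 < Real.sin α := Real.sin_pos_of_pos_of_lt_pi hα0 hαπ
  have Pα := Real.sin_sq_add_cos_sq α
  have hbs : b * Real.sin α = a * Real.sin β := by
    have hcαβ : Real.cos γ + Real.cos α * Real.cos β = Real.sin α * Real.sin β := by
      rw [hγval, Real.cos_pi_sub, Real.cos_add]
      ring
    have h : b * Real.sin α ^ 2 = a * (Real.cos γ + Real.cos α * Real.cos β) := by
      linear_combination b * Pα + Real.cos α * P1 - P2
    have h2 : Real.sin α * (b * Real.sin α) = Real.sin α * (a * Real.sin β) := by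
      linear_combination h + a * hcαβ
    exact mul_left_cancel₀ hsinα_pos.ne' h2
  have hcs2 : cc * Real.sin α = a * Real.sin (α + β) := by
    have hβval : β = Real.pi - (α + γ) := by linarith
    have hcαγ : Real.cos β + Real.cos α * Real.cos γ = Real.sin α * Real.sin γ := by
      rw [hβval, Real.cos_pi_sub, Real.cos_add]
      ring
    have h : cc * Real.sin α ^ 2 = a * (Real.cos β + Real.cos α * Real.cos γ) := by
      linear_combination cc * Pα + P1 - Real.cos α * P2
    have h2 : Real.sin α * (cc * Real.sin α) = Real.sin α * (a * Real.sin γ) := by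
      linear_combination h + a * hcαγ
    rw [← hsinγ]
    exact mul_left_cancel₀ hsinα_pos.ne' h2
  -- key trig identity
  have keytrig : (Real.sin α + Real.sin β + Real.sin (α + β)) * Real.cos (s + t) =
      2 * Real.sin (α + β) * (Real.cos s * Real.cos t) := by
    rw [hst2, hs2, ht2]
    rw [Real.sin_two_mul, Real.sin_two_mul, Real.sin_two_mul, Real.cos_add, Real.sin_add]
    linear_combination
      (-2 * (Real.cos s * Real.cos t - Real.sin s * Real.sin t) * Real.sin s * Real.cos s) * Pt +
      (-2 * (Real.cos s * Real.cos t - Real.sin s * Real.sin t) * Real.sin t * Real.cos t) * Ps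
  -- the key identity  (a + b + cc) * cos(s+t) = 2 cc cos s cos t
  have hkey : (a + b + cc) * Real.cos (s + t) = 2 * cc * (Real.cos s * Real.cos t) := by
    have h0 : ((a + b + cc) * Real.cos (s + t) - 2 * cc * (Real.cos s * Real.cos t)) *
        Real.sin α = 0 := by
      linear_combination (Real.cos (s + t)) * hbs +
        (Real.cos (s + t) - 2 * (Real.cos s * Real.cos t)) * hcs2 + a * keytrig
    rcases mul_eq_zero.mp h0 with h | h
    · linarith
    · linarith [hsinα_pos]
  -- wrap up
  have hcval : c = cc := by rw [hc, hcn]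
  have hpval : p = (a + b + cc) / 2 := by rw [hp, han, hca, hcn]
  have hcs_lt : Real.cos s < 1 := by
    have h1 : Real.cos s < Real.cos 0 := by
      apply Real.cos_lt_cos_of_nonneg_of_le_pi le_rfl (by rw [hsdef]; linarith)
      rw [hsdef]; linarith
    simpa using h1
  have hct_lt : Real.cos t < 1 := by
    have h1 : Real.cos t < Real.cos 0 := by
      apply Real.cos_lt_cos_of_nonneg_of_le_pi le_rfl (by rw [htdef]; linarith)
      rw [htdef]; linarith
    simpa using h1
  have hdiff : dist A₁ B₁ ^ 2 -
      (1 + (1 - cc) ^ 2 + 2 * cc * (1 - Real.cos s) * (1 - Real.cos t)) =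
      (2 - (a + b + cc)) * Real.cos (s + t) := by
    rw [hdistsq]
    linear_combination hkey
  have habc : a + b + cc ≤ 2 := by rw [hpval] at hp1; linarith
  have hprod : 0 ≤ (2 - (a + b + cc)) * Real.cos (s + t) :=
    mul_nonneg (by linarith) hcst_pos.le
  have hmain : 1 + (1 - c) ^ 2 + 2 * c * (1 - Real.cos (α / 2)) * (1 - Real.cos (β / 2)) ≤
      dist A₁ B₁ ^ 2 := by
    rw [hcval, ← hsdef, ← htdef]
    linarith [hdiff, hprod]
  refine ⟨hmain, lt_of_lt_of_le ?_ hmain⟩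
  rw [hcval, ← hsdef, ← htdef]
  have hpos : 0 < 2 * cc * (1 - Real.cos s) * (1 - Real.cos t) := by
    apply mul_pos (mul_pos (by linarith) (by linarith))
    linarith
  linarith [sq_nonneg (1 - cc)]
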